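/- Let k ≥ 3, i ∈ {2, ..., k-1}, and T = [k] \ {i} regarded as a tile in ℤ/kℤ. Suppose d ≥ 1 and X ⊂ (ℤ/kℤ)^d is a hole, i.e. (ℤ/kℤ)^d \ X is T-tilable. Then for each x ∈ X, the set ((X \ {x}) × {0}) ∪ {(0,...,0,k-1)} ⊂ (ℤ/kℤ)^{d+1} is a hole in (ℤ/kℤ)^{d+1}. -/
import Mathlib


def IsCopy {G : Type*} [AddCommGroup G] {d : ℕ} (T : Set G)
    (S : Set (Fin d → G)) : Prop :=
  ∃ (j : Fin d) (y : Fin d → G),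
    S = {z | ∃ t ∈ T, z = Function.update y j (y j + t)}

def Tilable {G : Type*} [AddCommGroup G] {d : ℕ} (T : Set G)
    (X : Set (Fin d → G)) : Prop :=
  ∃ P : Set (Set (Fin d → G)),
    (∀ S ∈ P, IsCopy T S) ∧ P.PairwiseDisjoint id ∧ ⋃₀ P = X

/-- `X` is a hole in `G^d` if its complement is `T`-tilable. -/
def IsHole {G : Type*} [AddCommGroup G] {d : ℕ} (T : Set G)
    (X : Set (Fin d → G)) : Prop :=
  Tilable T ({z : Fin d → G | z ∉ X})

section Aux

variable {G : Type*} [AddCommGroup G] {a : G} {T : Set G}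

/-- A line minus one (arbitrary) point is a copy, when `T = G \ {a}`. -/
lemma isCopy_line (hT : T = {t : G | t ≠ a}) {m : ℕ} (e : Fin m) (y : Fin m → G) (w : G) :
    IsCopy T {z | (∀ l, l ≠ e → z l = y l) ∧ z e ≠ w} := by
  refine ⟨e, Function.update y e (w - a), ?_⟩
  ext z
  simp only [Set.mem_setOf_eq, hT]
  constructor
  · rintro ⟨h1, h2⟩
    refine ⟨z e - w + a, ?_, ?_⟩
    · intro h
      apply h2
      have h' : z e - w + a = 0 + a := by rw [h, zero_add]
      have h'' := add_right_cancel h'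
      exact sub_eq_zero.mp h''
    · funext l
      by_cases hl : l = e
      · subst hl
        simp only [Function.update_self]
        abel
      · simp only [Function.update_of_ne hl]
        exact (h1 l hl)
  · rintro ⟨t, ht, rfl⟩
    refine ⟨fun l hl => by simp [Function.update_of_ne hl], ?_⟩
    simp only [Function.update_self]
    intro h
    apply ht
    have h' : w - a + t = w - a + a := by rw [h]; abel
    exact add_left_cancel h'

lemma forall_ne_last_iff {m : ℕ} (z : Fin (m + 1) → G) (z' : Fin m → G) (b : G) :
    (∀ l, l ≠ Fin.last m → z l = (Fin.snoc z' b : Fin (m + 1) → G) l) ↔ Fin.init z = z' := by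
  constructor
  · intro h
    funext l
    have hl := h l.castSucc (Fin.castSucc_lt_last l).ne
    rw [Fin.snoc_castSucc] at hl
    exact hl
  · intro h l hl
    obtain ⟨l', rfl⟩ := Fin.exists_castSucc_eq.mpr hl
    show z l'.castSucc = (Fin.snoc z' b : Fin (m + 1) → G) l'.castSucc
    rw [Fin.snoc_castSucc]
    exact congrFun h l'

/-- A vertical (last-direction) line minus one point is a copy. -/
lemma isCopy_col (hT : T = {t : G | t ≠ a}) {m : ℕ} (z' : Fin m → G) (w : G) :
    IsCopy T {z : Fin (m + 1) → G | Fin.init z = z' ∧ z (Fin.last m) ≠ w} := by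
  have hset : {z : Fin (m + 1) → G | Fin.init z = z' ∧ z (Fin.last m) ≠ w}
      = {z | (∀ l, l ≠ Fin.last m → z l = (Fin.snoc z' (0 : G) : Fin (m + 1) → G) l) ∧ z (Fin.last m) ≠ w} := by
    ext z
    simp only [Set.mem_setOf_eq, forall_ne_last_iff]
  rw [hset]
  exact isCopy_line hT _ _ _

def liftSet {G : Type*} {m : ℕ} (c : G) (S : Set (Fin m → G)) : Set (Fin (m + 1) → G) :=
  {z | Fin.init z ∈ S ∧ z (Fin.last m) = c}

lemma isCopy_liftSet {m : ℕ} {S : Set (Fin m → G)} (h : IsCopy T S) (c : G) :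
    IsCopy T (liftSet c S) := by
  obtain ⟨j, y, rfl⟩ := h
  refine ⟨j.castSucc, Fin.snoc y c, ?_⟩
  ext z
  simp only [liftSet, Set.mem_setOf_eq, Fin.snoc_castSucc]
  constructor
  · rintro ⟨⟨t, ht, hz⟩, hlast⟩
    refine ⟨t, ht, ?_⟩
    rw [← Fin.snoc_update, ← hz, ← hlast, Fin.snoc_init_self]
  · rintro ⟨t, ht, rfl⟩
    rw [← Fin.snoc_update]
    exact ⟨⟨t, ht, by rw [Fin.init_snoc]⟩, by rw [Fin.snoc_last]⟩

lemma tilable_liftSet {m : ℕ} {S : Set (Fin m → G)} (h : Tilable T S) (c : G) :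
    Tilable T (liftSet c S) := by
  obtain ⟨P, hcopy, hdisj, hun⟩ := h
  refine ⟨liftSet c '' P, ?_, ?_, ?_⟩
  · rintro _ ⟨S', hS', rfl⟩
    exact isCopy_liftSet (hcopy S' hS') c
  · rintro A hA B hB hne
    obtain ⟨S1, h1, rfl⟩ := hA
    obtain ⟨S2, h2, rfl⟩ := hB
    have hne' : S1 ≠ S2 := fun h => hne (by rw [h])
    have hd := hdisj h1 h2 hne'
    simp only [Function.onFun, id_eq] at hd ⊢
    rw [Set.disjoint_left] at hd ⊢
    rintro z hz1 hz2
    exact hd hz1.1 hz2.1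
  · ext z
    simp only [Set.mem_sUnion, Set.mem_image, liftSet, Set.mem_setOf_eq]
    constructor
    · rintro ⟨_, ⟨S1, h1, rfl⟩, hz, hc⟩
      exact ⟨by rw [← hun]; exact ⟨S1, h1, hz⟩, hc⟩
    · rintro ⟨hz, hc⟩
      rw [← hun] at hz
      obtain ⟨S1, h1, hz⟩ := hz
      exact ⟨liftSet c S1, ⟨S1, h1, rfl⟩, hz, hc⟩

lemma tilable_single {m : ℕ} {S : Set (Fin m → G)} (h : IsCopy T S) : Tilable T S :=
  ⟨{S}, by simpa using h, Set.pairwiseDisjoint_singleton _ _, Set.sUnion_singleton S⟩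

lemma tilable_iUnion {m : ℕ} {ι : Type*} (A : ι → Set (Fin m → G))
    (h : ∀ i, Tilable T (A i)) (hd : ∀ i j, i ≠ j → Disjoint (A i) (A j)) :
    Tilable T (⋃ i, A i) := by
  choose P hcopy hdisj hun using h
  refine ⟨⋃ i, P i, ?_, ?_, ?_⟩
  · intro S hS
    simp only [Set.mem_iUnion] at hS
    obtain ⟨i, hi⟩ := hS
    exact hcopy i S hi
  · intro S1 h1 S2 h2 hne
    simp only [Set.mem_iUnion] at h1 h2
    obtain ⟨i1, h1⟩ := h1
    obtain ⟨i2, h2⟩ := h2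
    by_cases hij : i1 = i2
    · subst hij
      exact hdisj i1 h1 h2 hne
    · have hsub1 : S1 ⊆ A i1 := by rw [← hun i1]; exact Set.subset_sUnion_of_mem h1
      have hsub2 : S2 ⊆ A i2 := by rw [← hun i2]; exact Set.subset_sUnion_of_mem h2
      simp only [Function.onFun, id_eq]
      exact (hd i1 i2 hij).mono hsub1 hsub2
  · rw [Set.sUnion_iUnion]
    exact Set.iUnion_congr hun

/-- The complement of a single point in `G^(m+1)` is tilable. -/
lemma tilable_compl_singleton (hT : T = {t : G | t ≠ a}) :
    ∀ (m : ℕ) (p : Fin (m + 1) → G), Tilable T {z | z ≠ p} := by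
  intro m
  induction m with
  | zero =>
    intro p
    apply tilable_single
    have hset : {z : Fin 1 → G | z ≠ p}
        = {z | (∀ l, l ≠ (0 : Fin 1) → z l = p l) ∧ z 0 ≠ p 0} := by
      ext z
      simp only [Set.mem_setOf_eq]
      constructor
      · intro h
        refine ⟨fun l hl => absurd (by omega) hl, fun h0 => h ?_⟩
        funext l
        have hl0 : l = (0 : Fin 1) := by omega
        rw [hl0]
        exact h0
      · rintro ⟨-, h0⟩ rfl
        exact h0 rfl
    rw [hset]
    exact isCopy_line hT 0 p (p 0)
  | succ m ih =>
    intro p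
    let A : Option (Fin (m + 1) → G) → Set (Fin (m + 2) → G) := fun o =>
      o.elim (liftSet (p (Fin.last (m + 1))) {z' | z' ≠ Fin.init p})
        (fun z' => {z | Fin.init z = z' ∧ z (Fin.last (m + 1)) ≠ p (Fin.last (m + 1))})
    have key : {z : Fin (m + 2) → G | z ≠ p} = ⋃ o, A o := by
      ext z
      simp only [Set.mem_setOf_eq, Set.mem_iUnion]
      constructor
      · intro hz
        by_cases hl : z (Fin.last (m + 1)) = p (Fin.last (m + 1))
        · refine ⟨none, ?_, hl⟩
          intro h
          apply hz
          rw [← Fin.snoc_init_self z, ← Fin.snoc_init_self p]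
          rw [show Fin.init z = Fin.init p from h, hl]
        · exact ⟨some (Fin.init z), rfl, hl⟩
      · rintro ⟨o, ho⟩
        match o with
        | none =>
          rintro rfl
          exact ho.1 rfl
        | some z' =>
          rintro rfl
          exact ho.2 rfl
    rw [key]
    apply tilable_iUnion
    · intro o
      match o with
      | none => exact tilable_liftSet (ih (Fin.init p)) _
      | some z' => exact tilable_single (isCopy_col hT z' _)
    · intro o1 o2 hne
      rw [Set.disjoint_left]
      intro z hz1 hz2
      match o1, o2 with
      | none, none => exact hne rfl
      | none, some z2 => exact hz2.2 hz1.2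
      | some z1, none => exact hz1.2 hz2.2
      | some z1, some z2 =>
        have : z1 = z2 := hz1.1.symm.trans hz2.1
        exact hne (by rw [this])

end Aux

/-- if `X` is a hole in `(ℤ/kℤ)^d` and `x ∈ X`, then
`((X \ {x}) × {0}) ∪ {(0,…,0,k-1)}` is a hole in `(ℤ/kℤ)^{d+1}`. -/
theorem movePoint (k i : ℕ) (hk : 3 ≤ k) (hi₁ : 2 ≤ i) (hi₂ : i ≤ k - 1)
    (d : ℕ) (hd : 1 ≤ d)
    (T : Set (ZMod k))
    (hT : T = (fun n : ℕ => (n : ZMod k)) '' {n : ℕ | 1 ≤ n ∧ n ≤ k ∧ n ≠ i})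
    (X : Set (Fin d → ZMod k)) (hX : IsHole T X) (x : Fin d → ZMod k)
    (hx : x ∈ X) :
    IsHole T
      ({z : Fin (d + 1) → ZMod k |
          (Fin.init z ∈ X \ {x} ∧ z (Fin.last d) = 0)} ∪
        {Fin.snoc (0 : Fin d → ZMod k) (((k - 1 : ℕ) : ZMod k))}) := by
  haveI : NeZero k := ⟨by omega⟩
  have hik : i < k := by omega
  have hT' : T = {t : ZMod k | t ≠ (i : ZMod k)} := by
    rw [hT]
    ext t
    simp only [Set.mem_image, Set.mem_setOf_eq]
    constructor
    · rintro ⟨n, ⟨hn1, hn2, hn3⟩, rfl⟩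
      intro heq
      have hmod : n % k = i % k := (ZMod.natCast_eq_natCast_iff n i k).mp heq
      rw [Nat.mod_eq_of_lt hik] at hmod
      rcases Nat.lt_or_ge n k with h | h
      · rw [Nat.mod_eq_of_lt h] at hmod; omega
      · have hnk : n = k := by omega
        subst hnk
        rw [Nat.mod_self] at hmod; omega
    · intro ht
      by_cases h0 : t = 0
      · refine ⟨k, ⟨by omega, le_refl k, by omega⟩, ?_⟩
        simp [h0, ZMod.natCast_self]
      · have hv : t.val ≠ 0 := fun h => h0 (by rwa [ZMod.val_eq_zero] at h)
        refine ⟨t.val, ⟨by omega, (ZMod.val_lt t).le, ?_⟩, (ZMod.natCast_rightInverse t)⟩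
        intro h
        apply ht
        rw [← ZMod.natCast_rightInverse t, h]
  set km1 : ZMod k := ((k - 1 : ℕ) : ZMod k) with hkm1def
  have hkm1 : km1 ≠ 0 := by
    intro h
    rw [hkm1def] at h
    have hdvd := (ZMod.natCast_eq_zero_iff (k - 1) k).mp h
    have := Nat.le_of_dvd (by omega) hdvd
    omega
  obtain ⟨m, rfl⟩ : ∃ m, d = m + 1 := ⟨d - 1, by omega⟩
  unfold IsHole
  let Q : ZMod k → Set (Fin (m + 1) → ZMod k) := fun c =>
    if c = 0 then {z' | z' ∉ X} else if c = km1 then {z' | z' ≠ 0} else {z' | z' ≠ x}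
  let A : Option (ZMod k) → Set (Fin (m + 2) → ZMod k) := fun o =>
    o.elim {z | Fin.init z = x ∧ z (Fin.last (m + 1)) ≠ km1} (fun c => liftSet c (Q c))
  have hsnoc : ∀ z : Fin (m + 2) → ZMod k,
      z = Fin.snoc (0 : Fin (m + 1) → ZMod k) km1 ↔
        Fin.init z = 0 ∧ z (Fin.last (m + 1)) = km1 := by
    intro z
    constructor
    · rintro rfl
      exact ⟨Fin.init_snoc _ _, Fin.snoc_last _ _⟩
    · rintro ⟨h1, h2⟩
      conv_lhs => rw [← Fin.snoc_init_self z]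
      rw [h1, h2]
  have key : {z : Fin (m + 2) → ZMod k |
      z ∉ ({z : Fin (m + 2) → ZMod k |
          (Fin.init z ∈ X \ {x} ∧ z (Fin.last (m + 1)) = 0)} ∪
        {Fin.snoc (0 : Fin (m + 1) → ZMod k) km1})} = ⋃ o, A o := by
    ext z
    simp only [Set.mem_setOf_eq, Set.mem_union, Set.mem_singleton_iff, Set.mem_diff,
      Set.mem_iUnion, not_or]
    constructor
    · rintro ⟨h1, h2⟩
      by_cases hcol : Fin.init z = x ∧ z (Fin.last (m + 1)) ≠ km1
      · exact ⟨none, hcol⟩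
      · refine ⟨some (z (Fin.last (m + 1))), ?_, rfl⟩
        by_cases hc0 : z (Fin.last (m + 1)) = 0
        · show Fin.init z ∈ Q _
          simp only [Q, if_pos hc0]
          intro hmemX
          by_cases hxx : Fin.init z = x
          · exact hkm1 (by rw [← (not_and.mp hcol hxx |> not_not.mp), hc0])
          · exact h1 ⟨⟨hmemX, by simpa using hxx⟩, hc0⟩
        · by_cases hck : z (Fin.last (m + 1)) = km1
          · show Fin.init z ∈ Q _
            simp only [Q, if_neg hc0, if_pos hck]
            intro h0
            exact h2 ((hsnoc z).mpr ⟨h0, hck⟩)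
          · show Fin.init z ∈ Q _
            simp only [Q, if_neg hc0, if_neg hck]
            intro hxx
            exact hcol ⟨hxx, hck⟩
    · rintro ⟨o, ho⟩
      match o with
      | none =>
        refine ⟨?_, ?_⟩
        · rintro ⟨⟨-, hnx⟩, -⟩
          exact hnx (by simpa using ho.1)
        · intro hs
          exact ho.2 ((hsnoc z).mp hs).2
      | some c =>
        have hoc := ho
        refine ⟨?_, ?_⟩
        · rintro ⟨⟨hmem1, -⟩, h0⟩
          have hc : c = 0 := by rw [← hoc.2, h0]
          have hq := hoc.1
          rw [hc] at hq
          simp only [Q, if_pos rfl] at hq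
          exact hq hmem1
        · intro hs
          obtain ⟨hinit, hlast⟩ := (hsnoc z).mp hs
          have hc : c = km1 := by rw [← hoc.2, hlast]
          have hq := hoc.1
          rw [hc] at hq
          simp only [Q, if_neg hkm1, if_pos rfl] at hq
          exact hq hinit
  rw [key]
  apply tilable_iUnion
  · intro o
    match o with
    | none => exact tilable_single (isCopy_col hT' x km1)
    | some c =>
      apply tilable_liftSet
      by_cases h0 : c = 0
      · show Tilable T (Q c)
        simp only [Q, if_pos h0]
        exact hX
      · by_cases h1 : c = km1
        · show Tilable T (Q c)
          simp only [Q, if_neg h0, if_pos h1]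
          exact tilable_compl_singleton hT' m 0
        · show Tilable T (Q c)
          simp only [Q, if_neg h0, if_neg h1]
          exact tilable_compl_singleton hT' m x
  · intro o1 o2 hne
    rw [Set.disjoint_left]
    intro z hz1 hz2
    match o1, o2 with
    | none, none => exact hne rfl
    | some c1, some c2 =>
      exact hne (by rw [show c1 = c2 from hz1.2.symm.trans hz2.2])
    | none, some c =>
      by_cases hc0 : c = 0
      · have hq := hz2.1
        rw [hc0] at hq
        simp only [Q, if_pos rfl] at hq
        exact hq (hz1.1 ▸ hx)
      · by_cases hck : c = km1
        · exact hz1.2 (hz2.2.trans hck)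
        · have hq := hz2.1
          simp only [Q, if_neg hc0, if_neg hck] at hq
          exact hq hz1.1
    | some c, none =>
      by_cases hc0 : c = 0
      · have hq := hz1.1
        rw [hc0] at hq
        simp only [Q, if_pos rfl] at hq
        exact hq (hz2.1 ▸ hx)
      · by_cases hck : c = km1
        · exact hz2.2 (hz1.2.trans hck)
        · have hq := hz1.1
          simp only [Q, if_neg hc0, if_neg hck] at hq
          exact hq hz2.1
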